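/- Suppose f : ℕ → ℂ satisfies a homogeneous linear recurrence f(n+d) + α₁ f(n+d-1) + ... + α_d f(n) = 0 for all n ≥ 0 with α_d ≠ 0, and also satisfies another such recurrence f(n+e) + β₁ f(n+e-1) + ... + β_e f(n) = 0 with β_e ≠ 0. Then the extensions of f to negative integers obtained by running each recurrence backwards agree: both define the same function f : ℤ → ℂ. -/

import Mathlib

/-- A sequence satisfying a linear recurrence (with last coefficient nonzero)
everywhere on ℤ and vanishing on ℕ vanishes everywhere. -/
lemma backward_zero_aux (h : ℤ → ℂ) (d : ℕ) (hd : 1 ≤ d) (α : ℕ → ℂ) (hα : α d ≠ 0)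
    (hrec : ∀ n : ℤ, h (n + d) + ∑ i ∈ Finset.Icc 1 d, α i * h (n + (d : ℤ) - (i : ℤ)) = 0)
    (h0 : ∀ n : ℤ, 0 ≤ n → h n = 0) : ∀ n : ℤ, h n = 0 := by
  have key : ∀ m : ℕ, ∀ n : ℤ, -(m : ℤ) ≤ n → h n = 0 := by
    intro m
    induction m with
    | zero => intro n hn; exact h0 n (by simpa using hn)
    | succ m ih =>
      intro n hn
      rcases lt_or_ge n (-(m : ℤ)) with hlt | hge
      · have hn' : n = -(m : ℤ) - 1 := by omega
        have heq := hrec n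
        have hsum : ∑ i ∈ Finset.Icc 1 d, α i * h (n + (d : ℤ) - (i : ℤ)) = α d * h n := by
          rw [Finset.sum_eq_single_of_mem d (by simp [hd])]
          · rw [show n + (d : ℤ) - (d : ℤ) = n from by ring]
          · intro i hi hne
            have hi' := Finset.mem_Icc.mp hi
            have : h (n + (d : ℤ) - (i : ℤ)) = 0 := ih _ (by omega)
            rw [this, mul_zero]
        rw [hsum, ih (n + d) (by omega), zero_add] at heq
        exact (mul_eq_zero.mp heq).resolve_left hα
      · exact ih n hge
  intro n
  exact key (n.natAbs + 1) n (by omega)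

theorem backward_extensions_agree (f : ℕ → ℂ) (d e : ℕ) (hd : 1 ≤ d) (he : 1 ≤ e)
    (α β : ℕ → ℂ) (hα : α d ≠ 0) (hβ : β e ≠ 0)
    (hf1 : ∀ n : ℕ, f (n + d) + ∑ i ∈ Finset.Icc 1 d, α i * f (n + d - i) = 0)
    (hf2 : ∀ n : ℕ, f (n + e) + ∑ i ∈ Finset.Icc 1 e, β i * f (n + e - i) = 0)
    (g₁ g₂ : ℤ → ℂ)
    (hg₁f : ∀ n : ℕ, g₁ n = f n) (hg₂f : ∀ n : ℕ, g₂ n = f n)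
    (hg₁ : ∀ n : ℤ, g₁ (n + d) + ∑ i ∈ Finset.Icc 1 d, α i * g₁ (n + (d : ℤ) - (i : ℤ)) = 0)
    (hg₂ : ∀ n : ℤ, g₂ (n + e) + ∑ i ∈ Finset.Icc 1 e, β i * g₂ (n + (e : ℤ) - (i : ℤ)) = 0) :
    g₁ = g₂ := by
  -- The defect of g₂ w.r.t. the α-recurrence
  set H : ℤ → ℂ := fun n => g₂ (n + d) + ∑ i ∈ Finset.Icc 1 d, α i * g₂ (n + (d : ℤ) - (i : ℤ))
    with hH
  have hH0 : ∀ n : ℤ, 0 ≤ n → H n = 0 := by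
    intro n hn
    lift n to ℕ using hn
    have h1 : g₂ ((n : ℤ) + d) = f (n + d) := by
      rw [show ((n : ℤ) + d) = ((n + d : ℕ) : ℤ) by push_cast; ring, hg₂f]
    have h2 : ∑ i ∈ Finset.Icc 1 d, α i * g₂ ((n : ℤ) + (d : ℤ) - (i : ℤ)) =
        ∑ i ∈ Finset.Icc 1 d, α i * f (n + d - i) := by
      apply Finset.sum_congr rfl
      intro i hi
      have hi' := Finset.mem_Icc.mp hi
      rw [show ((n : ℤ) + (d : ℤ) - (i : ℤ)) = ((n + d - i : ℕ) : ℤ) by omega, hg₂f]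
    simp only [hH, h1, h2]
    exact hf1 n
  have hHrec : ∀ n : ℤ, H (n + e) + ∑ j ∈ Finset.Icc 1 e, β j * H (n + (e : ℤ) - (j : ℤ)) = 0 := by
    intro n
    have step : H (n + e) + ∑ j ∈ Finset.Icc 1 e, β j * H (n + (e : ℤ) - (j : ℤ)) =
        (g₂ ((n + d) + e) + ∑ j ∈ Finset.Icc 1 e, β j * g₂ ((n + d) + (e : ℤ) - (j : ℤ))) +
        ∑ i ∈ Finset.Icc 1 d, α i *
          (g₂ ((n + (d : ℤ) - (i : ℤ)) + e) +
            ∑ j ∈ Finset.Icc 1 e, β j * g₂ ((n + (d : ℤ) - (i : ℤ)) + (e : ℤ) - (j : ℤ))) := by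
      simp only [hH, mul_add, Finset.mul_sum, Finset.sum_add_distrib]
      rw [Finset.sum_comm]
      have h0 : g₂ (n + (e:ℤ) + (d:ℤ)) = g₂ (n + (d:ℤ) + (e:ℤ)) := by
        rw [show n + (e:ℤ) + (d:ℤ) = n + (d:ℤ) + (e:ℤ) from by ring]
      have h1 : ∑ x ∈ Finset.Icc 1 d, α x * g₂ (n + (e:ℤ) + (d:ℤ) - (x:ℤ)) =
          ∑ x ∈ Finset.Icc 1 d, α x * g₂ (n + (d:ℤ) - (x:ℤ) + (e:ℤ)) :=
        Finset.sum_congr rfl fun x _ => by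
          rw [show n + (e:ℤ) + (d:ℤ) - (x:ℤ) = n + (d:ℤ) - (x:ℤ) + (e:ℤ) from by ring]
      have h2 : ∑ x ∈ Finset.Icc 1 e, β x * g₂ (n + (e:ℤ) - (x:ℤ) + (d:ℤ)) =
          ∑ x ∈ Finset.Icc 1 e, β x * g₂ (n + (d:ℤ) + (e:ℤ) - (x:ℤ)) :=
        Finset.sum_congr rfl fun x _ => by
          rw [show n + (e:ℤ) - (x:ℤ) + (d:ℤ) = n + (d:ℤ) + (e:ℤ) - (x:ℤ) from by ring]
      have h3 : ∑ x ∈ Finset.Icc 1 d, ∑ y ∈ Finset.Icc 1 e,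
            β y * (α x * g₂ (n + (e:ℤ) - (y:ℤ) + (d:ℤ) - (x:ℤ))) =
          ∑ x ∈ Finset.Icc 1 d, ∑ y ∈ Finset.Icc 1 e,
            α x * (β y * g₂ (n + (d:ℤ) - (x:ℤ) + (e:ℤ) - (y:ℤ))) :=
        Finset.sum_congr rfl fun x _ => Finset.sum_congr rfl fun y _ => by
          rw [show n + (e:ℤ) - (y:ℤ) + (d:ℤ) - (x:ℤ) = n + (d:ℤ) - (x:ℤ) + (e:ℤ) - (y:ℤ) from by
            ring]; ring
      rw [h0, h1, h2, h3]
      ring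
    rw [step, hg₂ (n + d), Finset.sum_eq_zero (fun i _ => by rw [hg₂ (n + (d : ℤ) - (i : ℤ)), mul_zero]),
      add_zero]
  have hHzero : ∀ n : ℤ, H n = 0 := backward_zero_aux H e he β hβ hHrec hH0
  -- Now g₂ satisfies the α-recurrence everywhere; consider D = g₁ - g₂
  set D : ℤ → ℂ := fun n => g₁ n - g₂ n with hD
  have hDrec : ∀ n : ℤ, D (n + d) + ∑ i ∈ Finset.Icc 1 d, α i * D (n + (d : ℤ) - (i : ℤ)) = 0 := by
    intro n
    have h1 := hg₁ n
    have h2 := hHzero n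
    simp only [hH] at h2
    simp only [hD, mul_sub, Finset.sum_sub_distrib]
    linear_combination h1 - h2
  have hD0 : ∀ n : ℤ, 0 ≤ n → D n = 0 := by
    intro n hn
    lift n to ℕ using hn
    simp [hD, hg₁f, hg₂f]
  have := backward_zero_aux D d hd α hα hDrec hD0
  funext n
  have hn := this n
  simp only [hD] at hn
  exact sub_eq_zero.mp hn
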